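/- Let R be a commutative ring, x an element of R that is a non-zerodivisor on R, and let J be an ideal of R contained in an ideal I₁. Then for any ideal A of R, (x²·I₁² + x·I₁·J) ∩ J² = x·J², provided x is a non-zerodivisor modulo J² (i.e., J² : x = J²) and J ⊆ I₁. -/

import Mathlib

/-- Let `R` be a commutative ring, `x ∈ R` a non-zerodivisor on `R`, and `I₁, J` ideals
with `J ⊆ I₁`.  If moreover `x` is a non-zerodivisor modulo `J²`, i.e. `J² : (x) = J²`,
then `(x²I₁² + xI₁J) ∩ J² = xJ²`. -/
theorem sparse_rees_intersection_lemma {R : Type*} [CommRing R] (x : R)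
    (hx : x ∈ nonZeroDivisors R) (I₁ J : Ideal R) (hJI : J ≤ I₁)
    (hcolon : (J ^ 2).colon (Ideal.span {x}) = J ^ 2) :
    (Ideal.span {x ^ 2} * I₁ ^ 2 + Ideal.span {x} * I₁ * J) ⊓ J ^ 2 =
      Ideal.span {x} * J ^ 2 := by
  apply le_antisymm
  · intro a ha
    rw [Submodule.mem_inf] at ha
    obtain ⟨ha1, ha2⟩ := ha
    obtain ⟨p, hp, q, hq, rfl⟩ := Submodule.mem_sup.mp ha1
    obtain ⟨b, hb, rfl⟩ := Ideal.mem_span_singleton_mul.mp hp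
    rw [mul_assoc] at hq
    obtain ⟨c, hc, rfl⟩ := Ideal.mem_span_singleton_mul.mp hq
    have key : x * b + c ∈ J ^ 2 := by
      rw [← hcolon, Ideal.mem_colon_span_singleton]
      have : (x * b + c) * x = x ^ 2 * b + x * c := by ring
      rwa [this]
    have : x ^ 2 * b + x * c = x * (x * b + c) := by ring
    rw [this]
    exact Ideal.mem_span_singleton_mul.mpr ⟨x * b + c, key, rfl⟩
  · refine le_inf ?_ (Ideal.mul_le_right)
    refine le_trans ?_ le_sup_right
    calc Ideal.span {x} * J ^ 2 = Ideal.span {x} * J * J := by rw [pow_two, mul_assoc]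
      _ ≤ Ideal.span {x} * I₁ * J :=
          Ideal.mul_mono (Ideal.mul_mono le_rfl hJI) le_rfl
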